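/- Let x_k^t be the solution of the regularized problem VI(X, F(·,θ_k) + ε_k I) and z_k^t the solution of VI(X, F(·,θ*) + ε_k I), where θ_k are the learning iterates with constant steplength 0 < γ_g < 2/G_g so that ‖θ_k − θ*‖ ≤ q_g^k ‖θ₀ − θ*‖ with q_g ∈ (0,1). If q_g^k/ε_k → 0 as k → ∞, then ‖x_k^t − z_k^t‖ ≤ (L_{F,θ}/ε_k) q_g^k ‖θ₀ − θ*‖ for all k, and in particular ‖x_k^t − z_k^t‖ → 0 as k → ∞. -/

import Mathlib

open Filter Topology RealInnerProductSpace

/-- Comparison of the Tikhonov trajectories `x_k^t` (solving `VI(X, F(·,θ_k) + ε_k I)`)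
and `z_k^t` (solving `VI(X, F(·,θ*) + ε_k I)`):
`‖x_k^t − z_k^t‖ ≤ (L_{F,θ}/ε_k) q_g^k ‖θ₀ − θ*‖` and, if `q_g^k/ε_k → 0`,
`‖x_k^t − z_k^t‖ → 0`. -/
theorem stmt_14
    {n m : ℕ}
    (X : Set (EuclideanSpace ℝ (Fin n))) (Θ : Set (EuclideanSpace ℝ (Fin m)))
    (hXne : X.Nonempty) (hXcl : IsClosed X) (hXcv : Convex ℝ X)
    (hΘne : Θ.Nonempty) (hΘcl : IsClosed Θ) (hΘcv : Convex ℝ Θ)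
    (F : EuclideanSpace ℝ (Fin n) → EuclideanSpace ℝ (Fin m) → EuclideanSpace ℝ (Fin n))
    (g : EuclideanSpace ℝ (Fin m) → ℝ)
    (gradg : EuclideanSpace ℝ (Fin m) → EuclideanSpace ℝ (Fin m))
    -- g is continuously differentiable and strongly convex with minimizer θ*
    (hgdiff : ∀ ϑ, HasGradientAt g (gradg ϑ) ϑ)
    (hggradcont : Continuous gradg)
    (ηg Gg : ℝ) (hηg : 0 < ηg) (hGg : 0 < Gg)
    (hstrg : StrongConvexOn Θ ηg g)
    (hLipg : ∀ θ1 θ2, ‖gradg θ1 - gradg θ2‖ ≤ Gg * ‖θ1 - θ2‖)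
    (θs : EuclideanSpace ℝ (Fin m)) (hθsΘ : θs ∈ Θ) (hθsmin : ∀ ϑ ∈ Θ, g θs ≤ g ϑ)
    -- monotonicity and Lipschitz continuity of F
    (hmono : ∀ x1 ∈ X, ∀ x2 ∈ X, 0 ≤ ⟪F x1 θs - F x2 θs, x1 - x2⟫)
    (LFx LFθ : ℝ)
    (hLipFx : ∀ θ' ∈ Θ, ∀ x1 ∈ X, ∀ x2 ∈ X, ‖F x1 θ' - F x2 θ'‖ ≤ LFx * ‖x1 - x2‖)
    (hLipFθ : ∀ y ∈ X, ∀ θ1 ∈ Θ, ∀ θ2 ∈ Θ, ‖F y θ1 - F y θ2‖ ≤ LFθ * ‖θ1 - θ2‖)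
    -- Euclidean projection onto Θ and the learning iterates with their geometric rate
    (PΘ : EuclideanSpace ℝ (Fin m) → EuclideanSpace ℝ (Fin m))
    (hPΘ : ∀ y, PΘ y ∈ Θ ∧ ∀ z ∈ Θ, ‖y - PΘ y‖ ≤ ‖y - z‖)
    (γg : ℝ) (hγg0 : 0 < γg) (hγg2 : γg < 2 / Gg)
    (θ : ℕ → EuclideanSpace ℝ (Fin m)) (hθ0 : θ 0 ∈ Θ)
    (hθit : ∀ k, θ (k + 1) = PΘ (θ k - γg • gradg (θ k)))
    (qg : ℝ) (hqg0 : 0 < qg) (hqg1 : qg < 1)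
    (hθrate : ∀ k, ‖θ k - θs‖ ≤ qg ^ k * ‖θ 0 - θs‖)
    -- regularization parameters
    (ε : ℕ → ℝ) (hε : ∀ k, 0 < ε k)
    (hqgε : Tendsto (fun k => qg ^ k / ε k) atTop (𝓝 0))
    -- the Tikhonov trajectories
    (xt zt : ℕ → EuclideanSpace ℝ (Fin n))
    (hxt : ∀ k, xt k ∈ X ∧ ∀ y ∈ X, 0 ≤ ⟪F (xt k) (θ k) + ε k • xt k, y - xt k⟫)
    (hzt : ∀ k, zt k ∈ X ∧ ∀ y ∈ X, 0 ≤ ⟪F (zt k) θs + ε k • zt k, y - zt k⟫) :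
    (∀ k, ‖xt k - zt k‖ ≤ LFθ / ε k * qg ^ k * ‖θ 0 - θs‖) ∧
      Tendsto (fun k => ‖xt k - zt k‖) atTop (𝓝 0) := by

  -- θ k stays in Θ
  have hθmem : ∀ k, θ k ∈ Θ := by
    intro k
    induction k with
    | zero => exact hθ0
    | succ k ih => rw [hθit]; exact (hPΘ _).1
  obtain ⟨y0, hy0⟩ := hXne
  -- key bound: ε k * ‖xt k - zt k‖ ≤ LFθ * ‖θ k - θs‖
  have keyA : ∀ k, ε k * ‖xt k - zt k‖ ≤ LFθ * ‖θ k - θs‖ := by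
    intro k
    set x := xt k with hx
    set z := zt k with hz
    have h1 := (hxt k).2 z (hzt k).1
    have h2 := (hzt k).2 x (hxt k).1
    have e1 : ⟪F x (θ k) + ε k • x, z - x⟫ + ⟪F z θs + ε k • z, x - z⟫
        = ⟪F x (θ k) - F x θs, z - x⟫ - ⟪F x θs - F z θs, x - z⟫
          - ε k * ‖x - z‖ ^ 2 := by
      have hns : ‖x - z‖ ^ 2 = ⟪x - z, x - z⟫ := (real_inner_self_eq_norm_sq _).symm
      rw [hns]
      simp only [inner_add_left, inner_sub_left, inner_sub_right, real_inner_smul_left]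
      ring_nf
    have hmono' : 0 ≤ ⟪F x θs - F z θs, x - z⟫ := hmono x (hxt k).1 z (hzt k).1
    have hcs : ⟪F x (θ k) - F x θs, z - x⟫ ≤ ‖F x (θ k) - F x θs‖ * ‖x - z‖ := by
      calc ⟪F x (θ k) - F x θs, z - x⟫ ≤ ‖F x (θ k) - F x θs‖ * ‖z - x‖ :=
            real_inner_le_norm _ _
        _ = ‖F x (θ k) - F x θs‖ * ‖x - z‖ := by rw [norm_sub_rev z x]
    have hFbd : ‖F x (θ k) - F x θs‖ ≤ LFθ * ‖θ k - θs‖ :=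
      hLipFθ x (hxt k).1 (θ k) (hθmem k) θs hθsΘ
    have hRHSnn : 0 ≤ LFθ * ‖θ k - θs‖ := le_trans (norm_nonneg _) hFbd
    have key : ε k * ‖x - z‖ ^ 2 ≤ (LFθ * ‖θ k - θs‖) * ‖x - z‖ := by
      have : 0 ≤ ⟪F x (θ k) - F x θs, z - x⟫ - ⟪F x θs - F z θs, x - z⟫
          - ε k * ‖x - z‖ ^ 2 := e1 ▸ add_nonneg h1 h2
      nlinarith [mul_le_mul_of_nonneg_right hFbd (norm_nonneg (x - z))]
    rcases eq_or_lt_of_le (norm_nonneg (x - z)) with h0 | h0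
    · rw [← h0, mul_zero]; exact hRHSnn
    · have := (mul_le_mul_iff_of_pos_right h0).1 (by nlinarith : (ε k * ‖x - z‖) * ‖x - z‖ ≤ (LFθ * ‖θ k - θs‖) * ‖x - z‖)
      exact this
  -- LFθ * ‖θ k - θs‖ ≤ LFθ * (qg ^ k * ‖θ 0 - θs‖)
  have keyB : ∀ k, LFθ * ‖θ k - θs‖ ≤ LFθ * (qg ^ k * ‖θ 0 - θs‖) := by
    intro k
    by_cases hθ0s : θ 0 = θs
    · have h0 : ‖θ 0 - θs‖ = 0 := by rw [hθ0s]; simp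
      have hk : ‖θ k - θs‖ = 0 := le_antisymm (by simpa [h0] using hθrate k) (norm_nonneg _)
      rw [hk, h0]; ring_nf; rfl
    · have hpos : 0 < ‖θ 0 - θs‖ := by
        rw [norm_pos_iff]; exact sub_ne_zero_of_ne hθ0s
      have hLnn : 0 ≤ LFθ := by
        have h1 := le_trans (norm_nonneg _) (hLipFθ y0 hy0 (θ 0) hθ0 θs hθsΘ)
        nlinarith
      exact mul_le_mul_of_nonneg_left (hθrate k) hLnn
  have hC : 0 ≤ LFθ * ‖θ 0 - θs‖ :=
    le_trans (norm_nonneg _) (hLipFθ y0 hy0 (θ 0) hθ0 θs hθsΘ)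
  have main : ∀ k, ‖xt k - zt k‖ ≤ LFθ / ε k * qg ^ k * ‖θ 0 - θs‖ := by
    intro k
    have h := le_trans (keyA k) (keyB k)
    have hεk := hε k
    rw [div_mul_eq_mul_div, div_mul_eq_mul_div, le_div_iff₀ hεk]
    nlinarith
  refine ⟨main, ?_⟩
  have htend : Tendsto (fun k => LFθ * ‖θ 0 - θs‖ * (qg ^ k / ε k)) atTop (𝓝 0) := by
    simpa using hqgε.const_mul (LFθ * ‖θ 0 - θs‖)
  refine squeeze_zero (fun k => norm_nonneg _) (fun k => ?_) htend
  calc ‖xt k - zt k‖ ≤ LFθ / ε k * qg ^ k * ‖θ 0 - θs‖ := main k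
    _ = LFθ * ‖θ 0 - θs‖ * (qg ^ k / ε k) := by ring
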